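/- Let q_{t|0} and q_{s|0} be transition kernels of a CTMC on a finite set X with rate matrices R_u (u ∈ [s,t]) whose rows have entries bounded in absolute value by a constant L (so |d/du q_{u|0}(x|x_0)| ≤ ∑_{x̃} q_{u|0}(x̃|x_0)|R_u(x̃,x)|). Then for any distribution q_0 on X and any x with q_t(x) > 0, (1/q_t(x))·E_{x_0∼q_0} |q_{t|0}(x|x_0) − q_{s|0}(x|x_0)| ≤ (t−s)·sup_{u∈[s,t]} ∑_{x̃} (q_u(x̃)/q_t(x)) |R_u(x̃,x)|. -/

import Mathlib

open Real Finset

/-- Expectation-level bound (Lemma 6): for a CTMC with rates bounded by `L` and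
Kolmogorov forward equations for the conditional kernels, for any initial distribution
`q0` and state `x` with positive marginal `q_t(x)`,
`(1/q_t(x))·E_{x₀∼q₀}|q_{t|0}(x|x₀) − q_{s|0}(x|x₀)|
  ≤ (t−s)·sup_{u∈[s,t]} ∑_{x̃} (q_u(x̃)/q_t(x))·|R_u(x̃,x)|`. -/
theorem expected_kernel_difference_bound {X : Type*} [Fintype X]
    (s t L : ℝ) (hst : s ≤ t) (hL : 0 ≤ L)
    (q0 : X → ℝ) (cond : ℝ → X → X → ℝ) (R : ℝ → X → X → ℝ) (x : X)
    (hq0nonneg : ∀ x0, 0 ≤ q0 x0) (hq0sum : ∑ x0, q0 x0 = 1)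
    (hcondnonneg : ∀ u y x0, 0 ≤ cond u y x0)
    (hRbound : ∀ u ∈ Set.Icc s t, ∀ y z : X, |R u y z| ≤ L)
    (hode : ∀ x0 y, ∀ u ∈ Set.Icc s t,
      HasDerivAt (fun v => cond v y x0) (∑ z, cond u z x0 * R u z y) u)
    (hpos : 0 < ∑ x0, q0 x0 * cond t x x0) :
    (1 / (∑ x0, q0 x0 * cond t x x0)) *
        ∑ x0, q0 x0 * |cond t x x0 - cond s x x0| ≤
      (t - s) * ⨆ u ∈ Set.Icc s t,
        ∑ z, ((∑ x0, q0 x0 * cond u z x0) / (∑ x0, q0 x0 * cond t x x0)) *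
          |R u z x| := by
  set Q : ℝ := ∑ x0, q0 x0 * cond t x x0 with hQdef
  have hQpos : 0 < Q := hpos
  have hQne : Q ≠ 0 := ne_of_gt hQpos
  set g : ℝ → ℝ := fun u => ∑ z, ((∑ x0, q0 x0 * cond u z x0) / Q) * |R u z x| with hgdef
  -- continuity of cond in time
  have hcont : ∀ y x0, ∀ u ∈ Set.Icc s t, ContinuousAt (fun v => cond v y x0) u :=
    fun y x0 u hu => (hode x0 y u hu).continuousAt
  -- bound on the total mass function H
  set H : ℝ → ℝ := fun u => ∑ x0, q0 x0 * ∑ z, cond u z x0 with hHdef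
  have hHcont : ContinuousOn H (Set.Icc s t) := by
    apply continuousOn_finset_sum
    intro x0 _
    exact continuousOn_const.mul <| continuousOn_finset_sum _ fun z _ =>
      fun u hu => (hcont z x0 u hu).continuousWithinAt
  obtain ⟨u0, hu0, hu0max⟩ := isCompact_Icc.exists_isMaxOn
    (Set.nonempty_Icc.mpr hst) hHcont
  set C : ℝ := H u0 with hCdef
  have hC : ∀ u ∈ Set.Icc s t, H u ≤ C := fun u hu => hu0max hu
  -- nonnegativity of g
  have hgnonneg : ∀ u, 0 ≤ g u := by
    intro u
    apply Finset.sum_nonneg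
    intro z _
    exact mul_nonneg (div_nonneg (Finset.sum_nonneg fun x0 _ =>
      mul_nonneg (hq0nonneg x0) (hcondnonneg u z x0)) hQpos.le) (abs_nonneg _)
  -- bound on g on Icc
  have hgle : ∀ u ∈ Set.Icc s t, g u ≤ L * C / Q := by
    intro u hu
    have h1 : g u ≤ ∑ z, ((∑ x0, q0 x0 * cond u z x0) / Q) * L := by
      apply Finset.sum_le_sum
      intro z _
      exact mul_le_mul_of_nonneg_left (hRbound u hu z x)
        (div_nonneg (Finset.sum_nonneg fun x0 _ =>
          mul_nonneg (hq0nonneg x0) (hcondnonneg u z x0)) hQpos.le)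
    have hsum : ∑ z, ∑ x0, q0 x0 * cond u z x0 = H u := by
      rw [hHdef, Finset.sum_comm]
      simp [Finset.mul_sum]
    have h2 : ∑ z, ((∑ x0, q0 x0 * cond u z x0) / Q) * L = L * H u / Q := by
      simp only [div_mul_eq_mul_div, ← Finset.sum_div, ← Finset.sum_mul, hsum]
      ring
    have h3 : L * H u / Q ≤ L * C / Q := by gcongr; exact hC u hu
    calc g u ≤ _ := h1
      _ = _ := h2
      _ ≤ _ := h3
  -- boundedness of the biSup family
  have hbdd : BddAbove (Set.range fun u => ⨆ _ : u ∈ Set.Icc s t, g u) := by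
    refine ⟨max (L * C / Q) 0, ?_⟩
    rintro y ⟨u, rfl⟩
    by_cases hu : u ∈ Set.Icc s t
    · haveI : Nonempty (u ∈ Set.Icc s t) := ⟨hu⟩
      exact le_max_of_le_left (ciSup_le fun _ => hgle u hu)
    · simp only [hu, not_false_iff]
      rw [Real.iSup_of_isEmpty]
      exact le_max_right _ _
  set Csup : ℝ := ⨆ u ∈ Set.Icc s t, g u with hCsupdef
  have hCsup : ∀ u ∈ Set.Icc s t, g u ≤ Csup := by
    intro u hu
    have h1 : g u ≤ ⨆ _ : u ∈ Set.Icc s t, g u :=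
      le_ciSup (f := fun _ : u ∈ Set.Icc s t => g u) (Set.Finite.bddAbove (Set.finite_range _)) hu
    exact h1.trans (le_ciSup hbdd u)
  have hCsup0 : 0 ≤ Csup := le_trans (hgnonneg s) (hCsup s (Set.mem_Icc.mpr ⟨le_rfl, hst⟩))
  -- per-x0 facts
  have key : ∀ x0 : X,
      IntervalIntegrable (deriv (fun v => cond v x x0)) MeasureTheory.volume s t ∧
      (∀ u ∈ Set.Icc s t, deriv (fun v => cond v x x0) u = ∑ z, cond u z x0 * R u z x) ∧
      |cond t x x0 - cond s x x0| ≤ ∫ u in s..t, |deriv (fun v => cond v x x0) u| := by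
    intro x0
    set f : ℝ → ℝ := fun v => cond v x x0 with hfdef
    have hder : ∀ u ∈ Set.Icc s t, HasDerivAt f (∑ z, cond u z x0 * R u z x) u :=
      fun u hu => hode x0 x u hu
    have hderiv_eq : ∀ u ∈ Set.Icc s t, deriv f u = ∑ z, cond u z x0 * R u z x :=
      fun u hu => (hder u hu).deriv
    -- bound on |deriv f| on Icc
    have hGcont : ContinuousOn (fun u => ∑ z, cond u z x0) (Set.Icc s t) :=
      continuousOn_finset_sum _ fun z _ => fun u hu => (hcont z x0 u hu).continuousWithinAt
    obtain ⟨u1, hu1, hu1max⟩ := isCompact_Icc.exists_isMaxOn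
      (Set.nonempty_Icc.mpr hst) hGcont
    have hdbound : ∀ u ∈ Set.Icc s t, |deriv f u| ≤ L * ∑ z, cond u1 z x0 := by
      intro u hu
      rw [hderiv_eq u hu]
      calc |∑ z, cond u z x0 * R u z x| ≤ ∑ z, |cond u z x0 * R u z x| :=
            Finset.abs_sum_le_sum_abs _ _
        _ ≤ ∑ z, cond u z x0 * L := by
            apply Finset.sum_le_sum
            intro z _
            rw [abs_mul, abs_of_nonneg (hcondnonneg u z x0)]
            exact mul_le_mul_of_nonneg_left (hRbound u hu z x) (hcondnonneg u z x0)
        _ = (∑ z, cond u z x0) * L := by rw [Finset.sum_mul]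
        _ ≤ (∑ z, cond u1 z x0) * L := by
            apply mul_le_mul_of_nonneg_right (hu1max hu) hL
        _ = L * ∑ z, cond u1 z x0 := mul_comm _ _
    have hint : IntervalIntegrable (deriv f) MeasureTheory.volume s t := by
      rw [intervalIntegrable_iff_integrableOn_Ioc_of_le hst]
      apply MeasureTheory.Integrable.mono'
        (MeasureTheory.integrableOn_const (C := L * ∑ z, cond u1 z x0) measure_Ioc_lt_top.ne)
        ((measurable_deriv f).aestronglyMeasurable.restrict)
      refine (MeasureTheory.ae_restrict_iff' measurableSet_Ioc).mpr (MeasureTheory.ae_of_all _ ?_)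
      intro u hu
      exact hdbound u (Set.Ioc_subset_Icc_self hu)
    refine ⟨hint, hderiv_eq, ?_⟩
    have hftc : ∫ u in s..t, deriv f u = f t - f s := by
      apply intervalIntegral.integral_eq_sub_of_hasDerivAt
      · intro u hu
        rw [Set.uIcc_of_le hst] at hu
        rw [hderiv_eq u hu]
        exact hder u hu
      · exact hint
    calc |cond t x x0 - cond s x x0| = |∫ u in s..t, deriv f u| := by rw [hftc]
      _ ≤ ∫ u in s..t, |deriv f u| := intervalIntegral.abs_integral_le_integral_abs hst
  -- integrability of the averaged derivative
  have hintD : IntervalIntegrable (fun u => ∑ x0, q0 x0 * |deriv (fun v => cond v x x0) u|)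
      MeasureTheory.volume s t := by
    have h := IntervalIntegrable.sum (μ := MeasureTheory.volume) (a := s) (b := t)
      Finset.univ (f := fun x0 u => q0 x0 * |deriv (fun v => cond v x x0) u|)
      (fun x0 _ => ((key x0).1.abs).const_mul _)
    have heq : (fun u => ∑ x0 : X, q0 x0 * |deriv (fun v => cond v x x0) u|) =
        ∑ x0 : X, fun u => q0 x0 * |deriv (fun v => cond v x x0) u| := by
      funext u
      simp
    rw [heq]
    exact h
  -- pointwise bound on Icc for the averaged derivative
  have hDbound : ∀ u ∈ Set.Icc s t,
      (∑ x0, q0 x0 * |deriv (fun v => cond v x x0) u|) ≤ Q * Csup := by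
    intro u hu
    have h1 : ∀ x0, |deriv (fun v => cond v x x0) u| ≤ ∑ z, cond u z x0 * |R u z x| := by
      intro x0
      rw [(key x0).2.1 u hu]
      calc |∑ z, cond u z x0 * R u z x| ≤ ∑ z, |cond u z x0 * R u z x| :=
            Finset.abs_sum_le_sum_abs _ _
        _ = ∑ z, cond u z x0 * |R u z x| := by
            apply Finset.sum_congr rfl
            intro z _
            rw [abs_mul, abs_of_nonneg (hcondnonneg u z x0)]
    calc (∑ x0, q0 x0 * |deriv (fun v => cond v x x0) u|)
        ≤ ∑ x0, q0 x0 * ∑ z, cond u z x0 * |R u z x| :=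
          Finset.sum_le_sum fun x0 _ =>
            mul_le_mul_of_nonneg_left (h1 x0) (hq0nonneg x0)
      _ = ∑ z, (∑ x0, q0 x0 * cond u z x0) * |R u z x| := by
          simp only [Finset.mul_sum]
          rw [Finset.sum_comm]
          apply Finset.sum_congr rfl
          intro z _
          rw [Finset.sum_mul]
          apply Finset.sum_congr rfl
          intro x0 _
          ring
      _ = Q * g u := by
          rw [hgdef, Finset.mul_sum]
          apply Finset.sum_congr rfl
          intro z _
          field_simp
      _ ≤ Q * Csup := mul_le_mul_of_nonneg_left (hCsup u hu) hQpos.le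
  -- main chain
  have main : (∑ x0, q0 x0 * |cond t x x0 - cond s x x0|) ≤ (t - s) * (Q * Csup) := by
    calc (∑ x0, q0 x0 * |cond t x x0 - cond s x x0|)
        ≤ ∑ x0, q0 x0 * ∫ u in s..t, |deriv (fun v => cond v x x0) u| :=
          Finset.sum_le_sum fun x0 _ =>
            mul_le_mul_of_nonneg_left (key x0).2.2 (hq0nonneg x0)
      _ = ∫ u in s..t, ∑ x0, q0 x0 * |deriv (fun v => cond v x x0) u| := by
          rw [intervalIntegral.integral_finset_sum
            (fun x0 _ => ((key x0).1.abs).const_mul _)]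
          apply Finset.sum_congr rfl
          intro x0 _
          rw [intervalIntegral.integral_const_mul]
      _ ≤ ∫ u in s..t, Q * Csup :=
          intervalIntegral.integral_mono_on hst hintD intervalIntegrable_const hDbound
      _ = (t - s) * (Q * Csup) := by rw [intervalIntegral.integral_const, smul_eq_mul]
  have := mul_le_mul_of_nonneg_left main (le_of_lt (one_div_pos.mpr hQpos))
  calc (1 / Q) * ∑ x0, q0 x0 * |cond t x x0 - cond s x x0|
      ≤ (1 / Q) * ((t - s) * (Q * Csup)) := this
    _ = (t - s) * Csup := by field_simp
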